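/- Let (i,j) be an isoclinism between groups G1 (with center Z1) and G2 (with center Z2), and let K1 be a normal subgroup of G1 contained in the commutator subgroup [G1,G1]. Then the image j(K1) is a normal subgroup of G2 contained in [G2,G2], and the quotient groups G1/K1 and G2/j(K1) are isoclinic. -/

import Mathlib

open scoped commutatorElement

open Subgroup QuotientGroup

-- commutator with central perturbations
theorem comm_central' {G : Type*} [Group G] (a b z w : G)
    (hz : z ∈ Subgroup.center G) (hw : w ∈ Subgroup.center G) :
    ⁅a * z, b * w⁆ = ⁅a, b⁆ := by
  have hz' : ∀ g : G, g * z = z * g := Subgroup.mem_center_iff.mp hz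
  have hw' : ∀ g : G, g * w = w * g := Subgroup.mem_center_iff.mp hw
  have h1 : ∀ c : G, ⁅a * z, c⁆ = ⁅a, c⁆ := by
    intro c
    have hzc : z * c * z⁻¹ = c := by rw [← hz' c]; group
    calc ⁅a * z, c⁆ = a * (z * c * z⁻¹) * a⁻¹ * c⁻¹ := by
          rw [commutatorElement_def]; group
      _ = ⁅a, c⁆ := by rw [hzc, commutatorElement_def]
  rw [h1]
  have hwb : w⁻¹ * b⁻¹ * w = b⁻¹ := by rw [hw' (w⁻¹ * b⁻¹)]; group
  calc ⁅a, b * w⁆ = a * b * (w * a⁻¹ * w⁻¹) * b⁻¹ := by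
        rw [commutatorElement_def]; group
    _ = ⁅a, b⁆ := by
        have : w * a⁻¹ * w⁻¹ = a⁻¹ := by rw [← hw' a⁻¹]; group
        rw [this, commutatorElement_def]

section
variable {G₁ G₂ : Type*} [Group G₁] [Group G₂]
  (i : (G₁ ⧸ Subgroup.center G₁) ≃* (G₂ ⧸ Subgroup.center G₂))
  (j : commutator G₁ ≃* commutator G₂)
  (hij : ∀ (x y : G₁) (x' y' : G₂),
      (QuotientGroup.mk x' : G₂ ⧸ Subgroup.center G₂) = i (QuotientGroup.mk x) →
      (QuotientGroup.mk y' : G₂ ⧸ Subgroup.center G₂) = i (QuotientGroup.mk y) →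
      (j ⟨⁅x, y⁆, Subgroup.commutator_mem_commutator (Subgroup.mem_top x)
          (Subgroup.mem_top y)⟩ : G₂) = ⁅x', y'⁆)

include hij in
theorem aux_hij' (x y : G₁) (hxy : ⁅x, y⁆ ∈ commutator G₁) (x' y' : G₂)
    (h1 : (QuotientGroup.mk x' : G₂ ⧸ Subgroup.center G₂) = i (QuotientGroup.mk x))
    (h2 : (QuotientGroup.mk y' : G₂ ⧸ Subgroup.center G₂) = i (QuotientGroup.mk y)) :
    (j ⟨⁅x, y⁆, hxy⟩ : G₂) = ⁅x', y'⁆ := hij x y x' y' h1 h2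

theorem aux_lift₁ (x : G₁) : ∃ x' : G₂,
    (QuotientGroup.mk x' : G₂ ⧸ Subgroup.center G₂) = i (QuotientGroup.mk x) :=
  QuotientGroup.mk_surjective (i (QuotientGroup.mk x))

theorem aux_lift₂ (x' : G₂) : ∃ x : G₁,
    (QuotientGroup.mk x' : G₂ ⧸ Subgroup.center G₂) = i (QuotientGroup.mk x) := by
  obtain ⟨q, hq⟩ := i.surjective (QuotientGroup.mk x')
  obtain ⟨x, rfl⟩ := QuotientGroup.mk_surjective q
  exact ⟨x, hq.symm⟩

include hij in
theorem aux_equiv_conj (g : G₁) (g' : G₂)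
    (hg : (QuotientGroup.mk g' : G₂ ⧸ Subgroup.center G₂) = i (QuotientGroup.mk g))
    (c : G₁) (hc : c ∈ commutator G₁) (hc' : g * c * g⁻¹ ∈ commutator G₁) :
    (j ⟨g * c * g⁻¹, hc'⟩ : G₂) = g' * (j ⟨c, hc⟩ : G₂) * g'⁻¹ := by
  have hmem : ∀ {a : G₁}, a ∈ commutator G₁ ↔ a ∈ Subgroup.closure (commutatorSet G₁) := by
    intro a; rw [commutator_eq_closure]
  suffices H : ∀ (d : G₁), d ∈ Subgroup.closure (commutatorSet G₁) →
      ∀ (hd : d ∈ commutator G₁) (hd' : g * d * g⁻¹ ∈ commutator G₁),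
        (j ⟨g * d * g⁻¹, hd'⟩ : G₂) = g' * (j ⟨d, hd⟩ : G₂) * g'⁻¹ by
    exact H c (hmem.mp hc) hc hc'
  intro d hd2
  induction hd2 using Subgroup.closure_induction with
  | mem x hx =>
    obtain ⟨u, v, rfl⟩ := hx
    intro hc hc'
    obtain ⟨u', hu⟩ := aux_lift₁ i u
    obtain ⟨v', hv⟩ := aux_lift₁ i v
    have hgu : (QuotientGroup.mk (g' * u' * g'⁻¹) : G₂ ⧸ Subgroup.center G₂)
        = i (QuotientGroup.mk (g * u * g⁻¹)) := by
      have l : (QuotientGroup.mk (g' * u' * g'⁻¹) : G₂ ⧸ Subgroup.center G₂)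
          = QuotientGroup.mk g' * QuotientGroup.mk u' * (QuotientGroup.mk g')⁻¹ := rfl
      have r : (QuotientGroup.mk (g * u * g⁻¹) : G₁ ⧸ Subgroup.center G₁)
          = QuotientGroup.mk g * QuotientGroup.mk u * (QuotientGroup.mk g)⁻¹ := rfl
      rw [l, r, map_mul, map_mul, map_inv, hu, hg]
    have hgv : (QuotientGroup.mk (g' * v' * g'⁻¹) : G₂ ⧸ Subgroup.center G₂)
        = i (QuotientGroup.mk (g * v * g⁻¹)) := by
      have l : (QuotientGroup.mk (g' * v' * g'⁻¹) : G₂ ⧸ Subgroup.center G₂)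
          = QuotientGroup.mk g' * QuotientGroup.mk v' * (QuotientGroup.mk g')⁻¹ := rfl
      have r : (QuotientGroup.mk (g * v * g⁻¹) : G₁ ⧸ Subgroup.center G₁)
          = QuotientGroup.mk g * QuotientGroup.mk v * (QuotientGroup.mk g)⁻¹ := rfl
      rw [l, r, map_mul, map_mul, map_inv, hv, hg]
    have e1 : g * ⁅u, v⁆ * g⁻¹ = ⁅g * u * g⁻¹, g * v * g⁻¹⁆ := by group
    have hc'' : ⁅g * u * g⁻¹, g * v * g⁻¹⁆ ∈ commutator G₁ := e1 ▸ hc'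
    have step : (⟨g * ⁅u, v⁆ * g⁻¹, hc'⟩ : commutator G₁)
        = ⟨⁅g * u * g⁻¹, g * v * g⁻¹⁆, hc''⟩ := Subtype.ext e1
    rw [step, aux_hij' i j hij _ _ _ _ _ hgu hgv,
      aux_hij' i j hij _ _ hc _ _ hu hv]
    group
  | one =>
    intro hc hc'
    have e1 : (⟨g * 1 * g⁻¹, hc'⟩ : commutator G₁) = 1 := by
      apply Subtype.ext; show g * 1 * g⁻¹ = 1; group
    have e2 : (⟨(1 : G₁), hc⟩ : commutator G₁) = 1 := rfl
    rw [e1, e2]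
    simp
  | mul x y hx hy ihx ihy =>
    intro hc hc'
    have hxm : x ∈ commutator G₁ := hmem.mpr hx
    have hym : y ∈ commutator G₁ := hmem.mpr hy
    have hxc' : g * x * g⁻¹ ∈ commutator G₁ :=
      (Subgroup.commutator_normal ⊤ ⊤).conj_mem x hxm g
    have hyc' : g * y * g⁻¹ ∈ commutator G₁ :=
      (Subgroup.commutator_normal ⊤ ⊤).conj_mem y hym g
    have e1 : (⟨g * (x * y) * g⁻¹, hc'⟩ : commutator G₁)
        = ⟨g * x * g⁻¹, hxc'⟩ * ⟨g * y * g⁻¹, hyc'⟩ := by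
      apply Subtype.ext; show g * (x * y) * g⁻¹ = (g * x * g⁻¹) * (g * y * g⁻¹); group
    have e2 : (⟨x * y, hc⟩ : commutator G₁) = ⟨x, hxm⟩ * ⟨y, hym⟩ := rfl
    rw [e1, e2, map_mul, map_mul]
    push_cast
    rw [ihx hxm hxc', ihy hym hyc']
    group
  | inv x hx ihx =>
    intro hc hc'
    have hxm : x ∈ commutator G₁ := hmem.mpr hx
    have hxc' : g * x * g⁻¹ ∈ commutator G₁ :=
      (Subgroup.commutator_normal ⊤ ⊤).conj_mem x hxm g
    have e1 : (⟨g * x⁻¹ * g⁻¹, hc'⟩ : commutator G₁) = (⟨g * x * g⁻¹, hxc'⟩)⁻¹ := by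
      apply Subtype.ext; show g * x⁻¹ * g⁻¹ = (g * x * g⁻¹)⁻¹; group
    have e2 : (⟨x⁻¹, hc⟩ : commutator G₁) = (⟨x, hxm⟩ : commutator G₁)⁻¹ := rfl
    rw [e1, e2, map_inv, map_inv]
    push_cast
    rw [ihx hxm hxc']
    group
end

/-- Two groups `G₁`, `G₂` with centers `Z₁`, `Z₂` are *isoclinic* if there are
isomorphisms `i : G₁/Z₁ ≃ G₂/Z₂` and `j : [G₁,G₁] ≃ [G₂,G₂]` compatible with the
commutator maps: whenever `x'Z₂ = i(xZ₁)` and `y'Z₂ = i(yZ₁)` one has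
`j([x,y]) = [x',y']`. -/
def IsIsoclinic (G₁ G₂ : Type*) [Group G₁] [Group G₂] : Prop :=
  ∃ (i : (G₁ ⧸ Subgroup.center G₁) ≃* (G₂ ⧸ Subgroup.center G₂))
    (j : commutator G₁ ≃* commutator G₂),
    ∀ (x y : G₁) (x' y' : G₂),
      (QuotientGroup.mk x' : G₂ ⧸ Subgroup.center G₂) = i (QuotientGroup.mk x) →
      (QuotientGroup.mk y' : G₂ ⧸ Subgroup.center G₂) = i (QuotientGroup.mk y) →
      (j ⟨⁅x, y⁆, Subgroup.commutator_mem_commutator (Subgroup.mem_top x)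
          (Subgroup.mem_top y)⟩ : G₂) = ⁅x', y'⁆

/-- Let `(i,j)` be an isoclinism between groups `G₁` (with center `Z₁`)
and `G₂` (with center `Z₂`), and let `K₁` be a normal subgroup of `G₁` contained in the
commutator subgroup `[G₁,G₁]`.  Then the image `j(K₁)` is a normal subgroup of `G₂`
contained in `[G₂,G₂]`, and the quotient groups `G₁/K₁` and `G₂/j(K₁)` are isoclinic. -/
theorem corresponding_quotients_isoclinic
    (G₁ G₂ : Type*) [Group G₁] [Group G₂]
    (i : (G₁ ⧸ Subgroup.center G₁) ≃* (G₂ ⧸ Subgroup.center G₂))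
    (j : commutator G₁ ≃* commutator G₂)
    (hij : ∀ (x y : G₁) (x' y' : G₂),
      (QuotientGroup.mk x' : G₂ ⧸ Subgroup.center G₂) = i (QuotientGroup.mk x) →
      (QuotientGroup.mk y' : G₂ ⧸ Subgroup.center G₂) = i (QuotientGroup.mk y) →
      (j ⟨⁅x, y⁆, Subgroup.commutator_mem_commutator (Subgroup.mem_top x)
          (Subgroup.mem_top y)⟩ : G₂) = ⁅x', y'⁆)
    (K₁ : Subgroup G₁) [K₁.Normal] (hK₁ : K₁ ≤ commutator G₁) :
    -- `j(K₁)`, as a subgroup of `G₂`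
    ∃ hn : (Subgroup.map (commutator G₂).subtype
        (Subgroup.map j.toMonoidHom
          (Subgroup.comap (commutator G₁).subtype K₁))).Normal,
      -- `j(K₁)` is contained in `[G₂,G₂]`
      Subgroup.map (commutator G₂).subtype
        (Subgroup.map j.toMonoidHom
          (Subgroup.comap (commutator G₁).subtype K₁)) ≤ commutator G₂ ∧
      -- `G₁/K₁` and `G₂/j(K₁)` are isoclinic
      @IsIsoclinic (G₁ ⧸ K₁)
        (G₂ ⧸ Subgroup.map (commutator G₂).subtype
          (Subgroup.map j.toMonoidHom
            (Subgroup.comap (commutator G₁).subtype K₁)))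
        _ (@QuotientGroup.Quotient.group G₂ _ _ hn) := by
  set K₁' : Subgroup (commutator G₁) := Subgroup.comap (commutator G₁).subtype K₁ with hK₁'def
  set K₂' : Subgroup (commutator G₂) := Subgroup.map j.toMonoidHom K₁' with hK₂'def
  set K₂ : Subgroup G₂ := Subgroup.map (commutator G₂).subtype K₂' with hK₂def
  -- membership transfer
  have mem_K₂_iff : ∀ (c : G₁) (hc : c ∈ commutator G₁),
      (j ⟨c, hc⟩ : G₂) ∈ K₂ ↔ c ∈ K₁ := by
    intro c hc
    constructor
    · intro h
      obtain ⟨b, hb, hbeq⟩ := h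
      have hb' : b = j ⟨c, hc⟩ := Subtype.ext hbeq
      subst hb'
      obtain ⟨a, ha, haeq⟩ := hb
      have : a = ⟨c, hc⟩ := j.injective haeq
      subst this
      exact ha
    · intro h
      exact ⟨j ⟨c, hc⟩, ⟨⟨c, hc⟩, h, rfl⟩, rfl⟩
  have mem_K₂_exists : ∀ b ∈ K₂, ∃ (c : G₁) (hc : c ∈ commutator G₁),
      c ∈ K₁ ∧ (j ⟨c, hc⟩ : G₂) = b := by
    intro b hb
    obtain ⟨b', hb', rfl⟩ := hb
    obtain ⟨a, ha, rfl⟩ := hb'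
    exact ⟨a.1, a.2, ha, rfl⟩
  have hn : K₂.Normal := by
    constructor
    intro n hnK g'
    obtain ⟨c, hc, hcK, rfl⟩ := mem_K₂_exists n hnK
    obtain ⟨g, hg⟩ := aux_lift₂ i g'
    have hc' : g * c * g⁻¹ ∈ commutator G₁ :=
      (Subgroup.commutator_normal ⊤ ⊤).conj_mem c hc g
    have := aux_equiv_conj i j hij g g' hg c hc hc'
    rw [← this]
    exact (mem_K₂_iff _ _).mpr (‹K₁.Normal›.conj_mem c hcK g)

  -- continue after hn
  haveI : K₂.Normal := hn
  set Q₁ := G₁ ⧸ K₁ with hQ₁def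
  set Q₂ := G₂ ⧸ K₂ with hQ₂def
  set W₁ : Subgroup G₁ := Subgroup.comap (QuotientGroup.mk' K₁) (Subgroup.center Q₁) with hW₁def
  set W₂ : Subgroup G₂ := Subgroup.comap (QuotientGroup.mk' K₂) (Subgroup.center Q₂) with hW₂def
  have mem_W₁ : ∀ g : G₁, g ∈ W₁ ↔ ∀ x : G₁, ⁅g, x⁆ ∈ K₁ := by
    intro g
    constructor
    · intro h x
      have h' := Subgroup.mem_center_iff.mp h
      rw [← QuotientGroup.eq_one_iff (⁅g, x⁆) (N := K₁)]
      have : (QuotientGroup.mk ⁅g, x⁆ : Q₁) = ⁅(QuotientGroup.mk g : Q₁), QuotientGroup.mk x⁆ :=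
        map_commutatorElement (QuotientGroup.mk' K₁) g x
      rw [this, commutatorElement_eq_one_iff_mul_comm]
      exact (h' (QuotientGroup.mk x)).symm
    · intro h
      rw [Subgroup.mem_comap, Subgroup.mem_center_iff]
      intro q
      obtain ⟨x, rfl⟩ := QuotientGroup.mk_surjective q
      have : (QuotientGroup.mk ⁅g, x⁆ : Q₁) = ⁅(QuotientGroup.mk g : Q₁), QuotientGroup.mk x⁆ :=
        map_commutatorElement (QuotientGroup.mk' K₁) g x
      have h2 : ⁅(QuotientGroup.mk g : Q₁), (QuotientGroup.mk x : Q₁)⁆ = (1 : Q₁) := by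
        rw [← this]; exact (QuotientGroup.eq_one_iff _).mpr (h x)
      exact (commutatorElement_eq_one_iff_mul_comm.mp h2).symm
  have mem_W₂ : ∀ g : G₂, g ∈ W₂ ↔ ∀ x : G₂, ⁅g, x⁆ ∈ K₂ := by
    intro g
    constructor
    · intro h x
      have h' := Subgroup.mem_center_iff.mp h
      rw [← QuotientGroup.eq_one_iff (⁅g, x⁆) (N := K₂)]
      have : (QuotientGroup.mk ⁅g, x⁆ : Q₂) = ⁅(QuotientGroup.mk g : Q₂), QuotientGroup.mk x⁆ :=
        map_commutatorElement (QuotientGroup.mk' K₂) g x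
      rw [this, commutatorElement_eq_one_iff_mul_comm]
      exact (h' (QuotientGroup.mk x)).symm
    · intro h
      rw [Subgroup.mem_comap, Subgroup.mem_center_iff]
      intro q
      obtain ⟨x, rfl⟩ := QuotientGroup.mk_surjective q
      have : (QuotientGroup.mk ⁅g, x⁆ : Q₂) = ⁅(QuotientGroup.mk g : Q₂), QuotientGroup.mk x⁆ :=
        map_commutatorElement (QuotientGroup.mk' K₂) g x
      have h2 : ⁅(QuotientGroup.mk g : Q₂), (QuotientGroup.mk x : Q₂)⁆ = (1 : Q₂) := by
        rw [← this]; exact (QuotientGroup.eq_one_iff _).mpr (h x)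
      exact (commutatorElement_eq_one_iff_mul_comm.mp h2).symm
  have hW : ∀ (g : G₁) (g' : G₂),
      (QuotientGroup.mk g' : G₂ ⧸ Subgroup.center G₂) = i (QuotientGroup.mk g) →
      (g ∈ W₁ ↔ g' ∈ W₂) := by
    intro g g' hg
    rw [mem_W₁, mem_W₂]
    constructor
    · intro h x'
      obtain ⟨x, hx⟩ := aux_lift₂ i x'
      have hgx : ⁅g, x⁆ ∈ commutator G₁ :=
        Subgroup.commutator_mem_commutator (Subgroup.mem_top g) (Subgroup.mem_top x)
      have := aux_hij' i j hij g x hgx g' x' hg hx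
      rw [← this]
      exact (mem_K₂_iff _ _).mpr (h x)
    · intro h x
      obtain ⟨x', hx⟩ := aux_lift₁ i x
      have hgx : ⁅g, x⁆ ∈ commutator G₁ :=
        Subgroup.commutator_mem_commutator (Subgroup.mem_top g) (Subgroup.mem_top x)
      have heq := aux_hij' i j hij g x hgx g' x' hg hx
      exact (mem_K₂_iff _ _).mp (heq ▸ h x')
  have hZ₂W₂ : Subgroup.center G₂ ≤ W₂ := by
    intro z hz
    rw [mem_W₂]
    intro x
    have : ⁅z, x⁆ = 1 := commutatorElement_eq_one_iff_mul_comm.mpr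
      ((Subgroup.mem_center_iff.mp hz x).symm)
    rw [this]; exact K₂.one_mem
  have hZ₁W₁ : Subgroup.center G₁ ≤ W₁ := by
    intro z hz
    rw [mem_W₁]
    intro x
    have : ⁅z, x⁆ = 1 := commutatorElement_eq_one_iff_mul_comm.mpr
      ((Subgroup.mem_center_iff.mp hz x).symm)
    rw [this]; exact K₁.one_mem
  have hK₁W₁ : K₁ ≤ W₁ := by
    intro k hk
    rw [Subgroup.mem_comap]
    have : (QuotientGroup.mk' K₁) k = 1 := (QuotientGroup.eq_one_iff k).mpr hk
    rw [this]; exact Subgroup.one_mem _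
  have hK₂W₂ : K₂ ≤ W₂ := by
    intro k hk
    rw [Subgroup.mem_comap]
    have : (QuotientGroup.mk' K₂) k = 1 := (QuotientGroup.eq_one_iff k).mpr hk
    rw [this]; exact Subgroup.one_mem _
  -- the hom F : G₁ →* Q₂ ⧸ center Q₂
  set φ₂ : G₂ →* (Q₂ ⧸ Subgroup.center Q₂) :=
    (QuotientGroup.mk' (Subgroup.center Q₂)).comp (QuotientGroup.mk' K₂) with hφ₂def
  have hφ₂ker : ∀ z ∈ Subgroup.center G₂, φ₂ z = 1 := by
    intro z hz
    show QuotientGroup.mk ((QuotientGroup.mk' K₂) z) = 1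
    rw [QuotientGroup.eq_one_iff]
    exact hZ₂W₂ hz
  set ℓ₂ : (G₂ ⧸ Subgroup.center G₂) →* (Q₂ ⧸ Subgroup.center Q₂) :=
    QuotientGroup.lift (Subgroup.center G₂) φ₂ hφ₂ker with hℓ₂def
  set F : G₁ →* (Q₂ ⧸ Subgroup.center Q₂) :=
    ℓ₂.comp (i.toMonoidHom.comp (QuotientGroup.mk' (Subgroup.center G₁))) with hFdef
  have F_spec : ∀ (g : G₁) (g' : G₂),
      (QuotientGroup.mk g' : G₂ ⧸ Subgroup.center G₂) = i (QuotientGroup.mk g) →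
      F g = QuotientGroup.mk (QuotientGroup.mk g' : Q₂) := by
    intro g g' hg
    show ℓ₂ (i (QuotientGroup.mk g)) = _
    rw [← hg]
    rfl
  have hFW : ∀ g ∈ W₁, F g = 1 := by
    intro g hg
    obtain ⟨g', hg'⟩ := aux_lift₁ i g
    rw [F_spec g g' hg']
    rw [QuotientGroup.eq_one_iff]
    exact (hW g g' hg').mp hg
  -- descend F to f : Q₁/Z(Q₁) →* Q₂/Z(Q₂)
  set F₁ : Q₁ →* (Q₂ ⧸ Subgroup.center Q₂) :=
    QuotientGroup.lift K₁ F (fun k hk => hFW k (hK₁W₁ hk)) with hF₁def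
  have hF₁center : ∀ q ∈ Subgroup.center Q₁, F₁ q = 1 := by
    intro q hq
    obtain ⟨g, rfl⟩ := QuotientGroup.mk_surjective q
    show F g = 1
    exact hFW g hq
  set f : (Q₁ ⧸ Subgroup.center Q₁) →* (Q₂ ⧸ Subgroup.center Q₂) :=
    QuotientGroup.lift (Subgroup.center Q₁) F₁ hF₁center with hfdef
  have f_spec : ∀ (g : G₁) (g' : G₂),
      (QuotientGroup.mk g' : G₂ ⧸ Subgroup.center G₂) = i (QuotientGroup.mk g) →
      f (QuotientGroup.mk (QuotientGroup.mk g : Q₁)) =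
        QuotientGroup.mk (QuotientGroup.mk g' : Q₂) := by
    intro g g' hg
    show F g = _
    exact F_spec g g' hg
  -- the reverse map
  have lift₂' : ∀ g' : G₂, ∃ g : G₁,
      (QuotientGroup.mk g : G₁ ⧸ Subgroup.center G₁) = i.symm (QuotientGroup.mk g') := by
    intro g'
    obtain ⟨g, hg⟩ := QuotientGroup.mk_surjective (i.symm (QuotientGroup.mk g'))
    exact ⟨g, hg⟩
  set φ₁ : G₁ →* (Q₁ ⧸ Subgroup.center Q₁) :=
    (QuotientGroup.mk' (Subgroup.center Q₁)).comp (QuotientGroup.mk' K₁) with hφ₁def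
  have hφ₁ker : ∀ z ∈ Subgroup.center G₁, φ₁ z = 1 := by
    intro z hz
    show QuotientGroup.mk ((QuotientGroup.mk' K₁) z) = 1
    rw [QuotientGroup.eq_one_iff]
    exact hZ₁W₁ hz
  set ℓ₁ : (G₁ ⧸ Subgroup.center G₁) →* (Q₁ ⧸ Subgroup.center Q₁) :=
    QuotientGroup.lift (Subgroup.center G₁) φ₁ hφ₁ker with hℓ₁def
  set F' : G₂ →* (Q₁ ⧸ Subgroup.center Q₁) :=
    ℓ₁.comp (i.symm.toMonoidHom.comp (QuotientGroup.mk' (Subgroup.center G₂))) with hF'def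
  have F'_spec : ∀ (g' : G₂) (g : G₁),
      (QuotientGroup.mk g : G₁ ⧸ Subgroup.center G₁) = i.symm (QuotientGroup.mk g') →
      F' g' = QuotientGroup.mk (QuotientGroup.mk g : Q₁) := by
    intro g' g hg
    show ℓ₁ (i.symm (QuotientGroup.mk g')) = _
    rw [← hg]
    rfl
  have hF'W : ∀ g' ∈ W₂, F' g' = 1 := by
    intro g' hg'
    obtain ⟨g, hg⟩ := lift₂' g'
    rw [F'_spec g' g hg]
    rw [QuotientGroup.eq_one_iff]
    have hig : (QuotientGroup.mk g' : G₂ ⧸ Subgroup.center G₂) = i (QuotientGroup.mk g) := by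
      rw [hg, MulEquiv.apply_symm_apply]
    exact (hW g g' hig).mpr hg'
  set F₂ : Q₂ →* (Q₁ ⧸ Subgroup.center Q₁) :=
    QuotientGroup.lift K₂ F' (fun k hk => hF'W k (hK₂W₂ hk)) with hF₂def
  have hF₂center : ∀ q ∈ Subgroup.center Q₂, F₂ q = 1 := by
    intro q hq
    obtain ⟨g, rfl⟩ := QuotientGroup.mk_surjective q
    show F' g = 1
    exact hF'W g hq
  set f' : (Q₂ ⧸ Subgroup.center Q₂) →* (Q₁ ⧸ Subgroup.center Q₁) :=
    QuotientGroup.lift (Subgroup.center Q₂) F₂ hF₂center with hf'def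
  have f'_spec : ∀ (g' : G₂) (g : G₁),
      (QuotientGroup.mk g : G₁ ⧸ Subgroup.center G₁) = i.symm (QuotientGroup.mk g') →
      f' (QuotientGroup.mk (QuotientGroup.mk g' : Q₂)) =
        QuotientGroup.mk (QuotientGroup.mk g : Q₁) := by
    intro g' g hg
    show F' g' = _
    exact F'_spec g' g hg
  have li : Function.LeftInverse f' f := by
    intro q
    obtain ⟨q1, rfl⟩ := QuotientGroup.mk_surjective q
    obtain ⟨g, rfl⟩ := QuotientGroup.mk_surjective q1
    obtain ⟨g', hg'⟩ := aux_lift₁ i g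
    rw [f_spec g g' hg']
    exact f'_spec g' g (by rw [hg', MulEquiv.symm_apply_apply])
  have ri : Function.RightInverse f' f := by
    intro q
    obtain ⟨q1, rfl⟩ := QuotientGroup.mk_surjective q
    obtain ⟨g', rfl⟩ := QuotientGroup.mk_surjective q1
    obtain ⟨g, hg⟩ := aux_lift₂ i g'
    rw [f'_spec g' g (by rw [hg, MulEquiv.symm_apply_apply])]
    exact f_spec g g' hg
  set iBar : (Q₁ ⧸ Subgroup.center Q₁) ≃* (Q₂ ⧸ Subgroup.center Q₂) :=
    { toFun := f, invFun := f', left_inv := li, right_inv := ri,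
      map_mul' := f.map_mul } with hiBardef
  have iBar_spec : ∀ (g : G₁) (g' : G₂),
      (QuotientGroup.mk g' : G₂ ⧸ Subgroup.center G₂) = i (QuotientGroup.mk g) →
      iBar (QuotientGroup.mk (QuotientGroup.mk g : Q₁)) =
        QuotientGroup.mk (QuotientGroup.mk g' : Q₂) := f_spec

  -- commutator subgroups of the quotients
  have hcomm₁ : Subgroup.map (QuotientGroup.mk' K₁) (commutator G₁) = commutator Q₁ := by
    rw [commutator_def, commutator_def, Subgroup.map_commutator,
      Subgroup.map_top_of_surjective _ (QuotientGroup.mk'_surjective K₁)]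
  have hcomm₂ : Subgroup.map (QuotientGroup.mk' K₂) (commutator G₂) = commutator Q₂ := by
    rw [commutator_def, commutator_def, Subgroup.map_commutator,
      Subgroup.map_top_of_surjective _ (QuotientGroup.mk'_surjective K₂)]
  have memcomm₁ : ∀ c : commutator G₁, (QuotientGroup.mk (c : G₁) : Q₁) ∈ commutator Q₁ := by
    intro c
    rw [← hcomm₁]
    exact ⟨c.1, c.2, rfl⟩
  have memcomm₂ : ∀ c : commutator G₂, (QuotientGroup.mk (c : G₂) : Q₂) ∈ commutator Q₂ := by
    intro c
    rw [← hcomm₂]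
    exact ⟨c.1, c.2, rfl⟩
  set B₁ : commutator G₁ →* commutator Q₁ :=
    MonoidHom.codRestrict ((QuotientGroup.mk' K₁).domRestrict (commutator G₁))
      (commutator Q₁) memcomm₁ with hB₁def
  set B₂ : commutator G₂ →* commutator Q₂ :=
    MonoidHom.codRestrict ((QuotientGroup.mk' K₂).domRestrict (commutator G₂))
      (commutator Q₂) memcomm₂ with hB₂def
  have surjB₁ : Function.Surjective B₁ := by
    rintro ⟨q, hq⟩
    rw [← hcomm₁] at hq
    obtain ⟨c, hc, hcq⟩ := hq
    exact ⟨⟨c, hc⟩, Subtype.ext hcq⟩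
  have surjB₂ : Function.Surjective B₂ := by
    rintro ⟨q, hq⟩
    rw [← hcomm₂] at hq
    obtain ⟨c, hc, hcq⟩ := hq
    exact ⟨⟨c, hc⟩, Subtype.ext hcq⟩
  have kerB₁ : B₁.ker = K₁' := by
    ext c
    rw [MonoidHom.mem_ker]
    constructor
    · intro h
      have h2 : (QuotientGroup.mk (c : G₁) : Q₁) = 1 := congrArg Subtype.val h
      exact (QuotientGroup.eq_one_iff (c : G₁)).mp h2
    · intro h
      apply Subtype.ext
      exact (QuotientGroup.eq_one_iff _).mpr h
  have kerB₂ : B₂.ker = Subgroup.comap (commutator G₂).subtype K₂ := by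
    ext c
    rw [MonoidHom.mem_ker]
    constructor
    · intro h
      have h2 : (QuotientGroup.mk (c : G₂) : Q₂) = 1 := congrArg Subtype.val h
      exact (QuotientGroup.eq_one_iff (c : G₂)).mp h2
    · intro h
      apply Subtype.ext
      exact (QuotientGroup.eq_one_iff _).mpr h
  have hK₂'eq : K₂' = Subgroup.comap (commutator G₂).subtype K₂ :=
    (Subgroup.comap_map_eq_self_of_injective (Subgroup.subtype_injective _) K₂').symm
  haveI hK₁'n : K₁'.Normal := kerB₁ ▸ B₁.normal_ker

  haveI hK₂'n : K₂'.Normal := by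
    rw [hK₂'eq]; exact Subgroup.Normal.comap hn _
  have kerB₂' : B₂.ker = K₂' := by rw [kerB₂, ← hK₂'eq]
  set e₁ : ((commutator G₁) ⧸ K₁') ≃* commutator Q₁ :=
    (QuotientGroup.quotientMulEquivOfEq kerB₁.symm).trans
      (QuotientGroup.quotientKerEquivOfSurjective B₁ surjB₁) with he₁def
  have e₁_spec : ∀ c : commutator G₁, e₁ (QuotientGroup.mk c) = B₁ c := by
    intro c; rfl
  set e₂ : ((commutator G₂) ⧸ K₂') ≃* commutator Q₂ :=
    (QuotientGroup.quotientMulEquivOfEq kerB₂'.symm).trans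
      (QuotientGroup.quotientKerEquivOfSurjective B₂ surjB₂) with he₂def
  have e₂_spec : ∀ c : commutator G₂, e₂ (QuotientGroup.mk c) = B₂ c := by
    intro c; rfl
  have hmapj : Subgroup.map (j : commutator G₁ →* commutator G₂) K₁' = K₂' := rfl
  set mid : ((commutator G₁) ⧸ K₁') ≃* ((commutator G₂) ⧸ K₂') :=
    QuotientGroup.congr K₁' K₂' j hmapj with hmiddef
  have mid_spec : ∀ c : commutator G₁,
      mid (QuotientGroup.mk c) = QuotientGroup.mk (j c) := by
    intro c; rfl
  set jBar : commutator Q₁ ≃* commutator Q₂ := (e₁.symm.trans mid).trans e₂ with hjBardef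
  have jBar_spec : ∀ (c : G₁) (hc : c ∈ commutator G₁)
      (hq : (QuotientGroup.mk c : Q₁) ∈ commutator Q₁),
      (jBar ⟨QuotientGroup.mk c, hq⟩ : Q₂) = QuotientGroup.mk ((j ⟨c, hc⟩ : G₂)) := by
    intro c hc hq
    have h1 : e₁ (QuotientGroup.mk ⟨c, hc⟩) = ⟨QuotientGroup.mk c, hq⟩ := by
      rw [e₁_spec]; exact Subtype.ext rfl
    have h2 : e₁.symm ⟨QuotientGroup.mk c, hq⟩ = QuotientGroup.mk (⟨c, hc⟩ : commutator G₁) :=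
      (MulEquiv.symm_apply_eq e₁).mpr h1.symm
    show ((e₂ (mid (e₁.symm ⟨QuotientGroup.mk c, hq⟩)) : commutator Q₂) : Q₂) = _
    rw [h2, mid_spec, e₂_spec]
    rfl
  -- final assembly
  refine ⟨hn, Subgroup.map_subtype_le _, iBar, jBar, ?_⟩
  intro x y x' y' hx hy
  obtain ⟨a, rfl⟩ := QuotientGroup.mk_surjective x
  obtain ⟨b, rfl⟩ := QuotientGroup.mk_surjective y
  obtain ⟨a', rfl⟩ := QuotientGroup.mk_surjective x'
  obtain ⟨b', rfl⟩ := QuotientGroup.mk_surjective y'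
  obtain ⟨a₀, ha₀⟩ := aux_lift₁ i a
  obtain ⟨b₀, hb₀⟩ := aux_lift₁ i b
  rw [iBar_spec a a₀ ha₀] at hx
  rw [iBar_spec b b₀ hb₀] at hy
  have hza : (QuotientGroup.mk (a'⁻¹ * a₀) : Q₂) ∈ Subgroup.center Q₂ := QuotientGroup.eq.mp hx
  have hzb : (QuotientGroup.mk (b'⁻¹ * b₀) : Q₂) ∈ Subgroup.center Q₂ := QuotientGroup.eq.mp hy
  have hza' : (QuotientGroup.mk (a₀⁻¹ * a') : Q₂) ∈ Subgroup.center Q₂ := by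
    have e : a₀⁻¹ * a' = (a'⁻¹ * a₀)⁻¹ := by group
    rw [e, QuotientGroup.mk_inv]
    exact (Subgroup.center Q₂).inv_mem hza
  have hzb' : (QuotientGroup.mk (b₀⁻¹ * b') : Q₂) ∈ Subgroup.center Q₂ := by
    have e : b₀⁻¹ * b' = (b'⁻¹ * b₀)⁻¹ := by group
    rw [e, QuotientGroup.mk_inv]
    exact (Subgroup.center Q₂).inv_mem hzb
  have habm : ⁅a, b⁆ ∈ commutator G₁ :=
    Subgroup.commutator_mem_commutator (Subgroup.mem_top a) (Subgroup.mem_top b)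
  have hqm : (QuotientGroup.mk ⁅a, b⁆ : Q₁) ∈ commutator Q₁ := memcomm₁ ⟨⁅a, b⁆, habm⟩
  have hsub : (⟨⁅(QuotientGroup.mk a : Q₁), QuotientGroup.mk b⁆,
      Subgroup.commutator_mem_commutator (Subgroup.mem_top _) (Subgroup.mem_top _)⟩ :
        commutator Q₁) = ⟨QuotientGroup.mk ⁅a, b⁆, hqm⟩ :=
    Subtype.ext (map_commutatorElement (QuotientGroup.mk' K₁) a b).symm
  rw [hsub, jBar_spec ⁅a, b⁆ habm hqm, aux_hij' i j hij a b habm a₀ b₀ ha₀ hb₀]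
  have h3 : (QuotientGroup.mk ⁅a₀, b₀⁆ : Q₂) = ⁅(QuotientGroup.mk a₀ : Q₂), QuotientGroup.mk b₀⁆ :=
    map_commutatorElement (QuotientGroup.mk' K₂) a₀ b₀
  rw [h3]
  have ea : (QuotientGroup.mk a' : Q₂)
      = QuotientGroup.mk a₀ * QuotientGroup.mk (a₀⁻¹ * a') := by
    rw [← QuotientGroup.mk_mul]
    exact congrArg _ (by group)
  have eb : (QuotientGroup.mk b' : Q₂)
      = QuotientGroup.mk b₀ * QuotientGroup.mk (b₀⁻¹ * b') := by
    rw [← QuotientGroup.mk_mul]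
    exact congrArg _ (by group)
  rw [ea, eb]
  exact (comm_central' _ _ _ _ hza' hzb').symm
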